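/- Let h be nonnegative with 1/2 in its domain, G : [0,∞) → ℝ be (h,1)-convex (i.e., h-convex), and W : [ν, μ] → ℝ nonnegative, integrable, and symmetric about (ν+μ)/2 (i.e., W(ν+μ-x) = W(x)). If h(1/2) ≠ 0 and G, W are integrable on [ν, μ], then G((ν+μ)/2) · ∫_ν^μ W(x) dx ≤ 2·h(1/2) · ∫_ν^μ G(x)W(x) dx. -/

import Mathlib

theorem h_convex_fejer_left
    (ν μ : ℝ) (hν : 0 ≤ ν) (hνμ : ν < μ)
    (h : ℝ → ℝ) (hh : ∀ γ ∈ Set.Icc (0:ℝ) 1, 0 ≤ h γ) (hhalf : h (1/2) ≠ 0)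
    (G W : ℝ → ℝ)
    (hGnonneg : ∀ x : ℝ, 0 ≤ x → 0 ≤ G x)
    (hG : ∀ x : ℝ, 0 ≤ x → ∀ y : ℝ, 0 ≤ y → ∀ γ ∈ Set.Icc (0:ℝ) 1,
      G (γ * x + (1 - γ) * y) ≤ h γ * G x + h (1 - γ) * G y)
    (hWnonneg : ∀ x ∈ Set.Icc ν μ, 0 ≤ W x)
    (hWsym : ∀ x ∈ Set.Icc ν μ, W (ν + μ - x) = W x)
    (hWint : IntervalIntegrable W MeasureTheory.volume ν μ)
    (hGint : IntervalIntegrable G MeasureTheory.volume ν μ)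
    (hGWint : IntervalIntegrable (fun x => G x * W x) MeasureTheory.volume ν μ) :
    G ((ν + μ) / 2) * (∫ x in ν..μ, W x) ≤ 2 * h (1/2) * ∫ x in ν..μ, G x * W x := by
  have hle : ν ≤ μ := hνμ.le
  have hhpos : 0 ≤ h (1/2) := hh _ (by norm_num)
  -- integrability of reflected product
  have hrefl : IntervalIntegrable (fun x => G (ν + μ - x) * W (ν + μ - x))
      MeasureTheory.volume ν μ := by
    have := (hGWint.comp_sub_left (ν + μ))
    simpa using this.symm
  have hrefleq : ∀ x ∈ Set.Icc ν μ,
      G (ν + μ - x) * W (ν + μ - x) = G (ν + μ - x) * W x := by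
    intro x hx
    rw [hWsym x hx]
  have hrefl' : IntervalIntegrable (fun x => G (ν + μ - x) * W x)
      MeasureTheory.volume ν μ := by
    apply hrefl.congr
    have : Set.uIoc ν μ ⊆ Set.Icc ν μ := by
      rw [Set.uIoc_of_le hle]; exact Set.Ioc_subset_Icc_self
    exact fun x hx => (hrefleq x (this hx))
  -- value of reflected integral
  have hreflint : (∫ x in ν..μ, G (ν + μ - x) * W x) = ∫ x in ν..μ, G x * W x := by
    rw [intervalIntegral.integral_congr (g := fun x => G (ν + μ - x) * W (ν + μ - x))]
    · have := intervalIntegral.integral_comp_sub_left (a := ν) (b := μ)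
        (fun x => G x * W x) (ν + μ)
      simpa using this
    · intro x hx
      rw [Set.uIcc_of_le hle] at hx
      exact (hrefleq x hx).symm
  -- pointwise inequality
  have key : ∀ x ∈ Set.Icc ν μ,
      G ((ν + μ) / 2) * W x ≤ h (1/2) * (G x * W x + G (ν + μ - x) * W x) := by
    intro x hx
    have hx0 : 0 ≤ x := hν.trans hx.1
    have hy0 : 0 ≤ ν + μ - x := by
      have := hx.2; linarith
    have hmid : (ν + μ) / 2 = (1/2) * x + (1 - 1/2) * (ν + μ - x) := by ring
    have hconv := hG x hx0 (ν + μ - x) hy0 (1/2) (by norm_num)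
    rw [← hmid] at hconv
    have hW0 := hWnonneg x hx
    calc G ((ν + μ) / 2) * W x
        ≤ (h (1/2) * G x + h (1 - 1/2) * G (ν + μ - x)) * W x :=
          mul_le_mul_of_nonneg_right hconv hW0
      _ = h (1/2) * (G x * W x + G (ν + μ - x) * W x) := by norm_num; ring
  -- integrate
  have hint1 : IntervalIntegrable (fun x => G ((ν + μ) / 2) * W x)
      MeasureTheory.volume ν μ := hWint.const_mul _
  have hint2 : IntervalIntegrable (fun x => h (1/2) * (G x * W x + G (ν + μ - x) * W x))
      MeasureTheory.volume ν μ := (hGWint.add hrefl').const_mul _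
  have hmono := intervalIntegral.integral_mono_on hle hint1 hint2 key
  rw [intervalIntegral.integral_const_mul, intervalIntegral.integral_const_mul,
    intervalIntegral.integral_add hGWint hrefl', hreflint] at hmono
  linarith
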